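/- Let V be a vector space over a field, and let B₁, B₂ : V × V → V be bilinear alternating maps. Let (H_i)_{i≥0} and (H'_j)_{j≥0} be two sequences in V such that B₁(H₀, f) = 0 and B₁(H'₀, f) = 0 for all f ∈ V (the anchoring condition), and such that the Lenard recursion B₂(H_i, f) = −B₁(H_{i+1}, f) and B₂(H'_j, f) = −B₁(H'_{j+1}, f) holds for all f ∈ V and all i, j ≥ 0. Then B₁(H_i, H'_j) = 0 and B₂(H_i, H'_j) = 0 for all i, j ≥ 0. -/
import Mathlib

lemma alt_skew {K V : Type*} [Field K] [AddCommGroup V] [Module K V]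
    (B : V →ₗ[K] V →ₗ[K] V) (halt : ∀ f, B f f = 0) (f g : V) :
    B f g = - B g f := by
  have h := halt (f + g)
  simp only [map_add, LinearMap.add_apply, halt, zero_add, add_zero] at h
  exact eq_neg_of_add_eq_zero_right h

/-- two anchored formal λ-families are in involution with respect to
both brackets. -/
theorem anchored_lenard_families_commute
    {K V : Type*} [Field K] [AddCommGroup V] [Module K V]
    (B₁ B₂ : V →ₗ[K] V →ₗ[K] V)
    (halt₁ : ∀ f, B₁ f f = 0) (halt₂ : ∀ f, B₂ f f = 0)
    (H H' : ℕ → V)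
    (hanch : ∀ f, B₁ (H 0) f = 0) (hanch' : ∀ f, B₁ (H' 0) f = 0)
    (hrec : ∀ i f, B₂ (H i) f = - B₁ (H (i + 1)) f)
    (hrec' : ∀ j f, B₂ (H' j) f = - B₁ (H' (j + 1)) f) :
    ∀ i j, B₁ (H i) (H' j) = 0 ∧ B₂ (H i) (H' j) = 0 := by
  -- shift identity
  have shift : ∀ i j, B₁ (H (i + 1)) (H' j) = B₁ (H i) (H' (j + 1)) := by
    intro i j
    have h1 : B₂ (H i) (H' j) = - B₁ (H (i + 1)) (H' j) := hrec i _
    have h2 : B₂ (H' j) (H i) = - B₁ (H' (j + 1)) (H i) := hrec' j _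
    have h3 : B₂ (H i) (H' j) = - B₂ (H' j) (H i) := alt_skew B₂ halt₂ _ _
    have h4 : B₁ (H' (j + 1)) (H i) = - B₁ (H i) (H' (j + 1)) :=
      alt_skew B₁ halt₁ _ _
    have := h1.symm.trans (h3.trans (by rw [h2, h4]))
    simpa using this
  have hB1 : ∀ i j, B₁ (H i) (H' j) = 0 := by
    intro i
    induction i with
    | zero => intro j; exact hanch _
    | succ n ih => intro j; rw [shift n j]; exact ih (j + 1)
  intro i j
  refine ⟨hB1 i j, ?_⟩
  rw [hrec i, hB1 (i + 1) j, neg_zero]
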